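/- Fix d ≥ 1, a nonzero vector μ ∈ ℝ^d, σ > 0, and p ∈ (1/2, 1). Let D be the distribution on ℝ^d × {−1,+1} where Y is uniform on {−1,+1}, X given Y=+1 is N(μ, σ²I), and X given Y=−1 is the mixture p·N(−μ, σ²I) + (1−p)·N(3μ, σ²I). Let h^LDA be the classifier that outputs +1 if ‖x − μ‖ ≤ ‖x − μ₋‖ and −1 otherwise, where μ₋ = −(4p−3)μ. Then the misclassification error satisfies Pr_{(X,Y)∼D}[h^LDA(X) ≠ Y] = (1/2)[Φ(−(2p−1)‖μ‖/σ) + p·Φ(−(3−2p)‖μ‖/σ) + (1−p)·Φ((2p+1)‖μ‖/σ)]. -/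

import Mathlib

open MeasureTheory Real Set ProbabilityTheory
open scoped ENNReal RealInnerProductSpace

/-- The standard normal cumulative distribution function
`Φ(z) = ∫_{−∞}^z (1/√(2π)) e^{−u²/2} du`. -/
noncomputable def stdNormCDF (z : ℝ) : ℝ :=
  ∫ u in Set.Iic z, (1 / Real.sqrt (2 * Real.pi)) * Real.exp (-u ^ 2 / 2)
/-- Density of the `d`-dimensional Gaussian `N(m, σ²I)`:
`f(x; m, σ²I) = (2πσ²)^{−d/2} exp(−‖x−m‖²/(2σ²))`. -/
noncomputable def gaussPdf (d : ℕ) (m : EuclideanSpace ℝ (Fin d)) (σ : ℝ)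
    (x : EuclideanSpace ℝ (Fin d)) : ℝ :=
  (2 * Real.pi * σ ^ 2) ^ (-(d : ℝ) / 2) * Real.exp (-‖x - m‖ ^ 2 / (2 * σ ^ 2))

/-- The `d`-dimensional Gaussian measure `N(m, σ²I)` on `ℝ^d`. -/
noncomputable def gauss (d : ℕ) (m : EuclideanSpace ℝ (Fin d)) (σ : ℝ) :
    Measure (EuclideanSpace ℝ (Fin d)) :=
  volume.withDensity fun x => ENNReal.ofReal (gaussPdf d m σ x)
/-- The data-generating distribution `D` on `ℝ^d × {−1,+1}` (labels embedded in `ℝ`):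
`Y` is uniform on `{−1,+1}`, `X | Y=+1 ∼ N(μ, σ²I)`, and
`X | Y=−1 ∼ p·N(−μ, σ²I) + (1−p)·N(3μ, σ²I)`. -/
noncomputable def Dmix (d : ℕ) (μv : EuclideanSpace ℝ (Fin d)) (σ p : ℝ) :
    Measure (EuclideanSpace ℝ (Fin d) × ℝ) :=
  ENNReal.ofReal (1 / 2) • (gauss d μv σ).map (fun x => (x, (1 : ℝ)))
    + ENNReal.ofReal (p / 2) • (gauss d (-μv) σ).map (fun x => (x, (-1 : ℝ)))
    + ENNReal.ofReal ((1 - p) / 2) • (gauss d ((3 : ℝ) • μv) σ).map (fun x => (x, (-1 : ℝ)))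
/-- The LDA classifier with centers `μ` and `μ₋ = −(4p−3)μ`: outputs `+1`
iff `‖x − μ‖ ≤ ‖x − μ₋‖`. -/
noncomputable def hLDA (d : ℕ) (μv : EuclideanSpace ℝ (Fin d)) (p : ℝ)
    (x : EuclideanSpace ℝ (Fin d)) : ℝ :=
  if ‖x - μv‖ ≤ ‖x - (-(4 * p - 3)) • μv‖ then 1 else -1

noncomputable def phi (σ t : ℝ) : ℝ :=
  (2 * Real.pi * σ ^ 2) ^ (-(1:ℝ)/2) * Real.exp (-t ^ 2 / (2 * σ ^ 2))

lemma phi_nonneg (σ t : ℝ) : 0 ≤ phi σ t := by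
  unfold phi; positivity

lemma phi_even (σ t : ℝ) : phi σ (-t) = phi σ t := by
  unfold phi; rw [neg_pow]; ring_nf

lemma phi_integrable {σ : ℝ} (hσ : 0 < σ) : Integrable (phi σ) := by
  have h : phi σ = fun t => (2 * Real.pi * σ ^ 2) ^ (-(1:ℝ)/2)
      * Real.exp (-(1/(2*σ^2)) * t ^ 2) := by
    funext t; unfold phi; congr 1; congr 1; field_simp
  rw [h]
  exact (integrable_exp_neg_mul_sq (by positivity)).const_mul _

lemma phi_integral {σ : ℝ} (hσ : 0 < σ) : ∫ t, phi σ t = 1 := by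
  have h : ∀ t : ℝ, phi σ t = (2 * Real.pi * σ ^ 2) ^ (-(1:ℝ)/2)
      * Real.exp (-(1/(2*σ^2)) * t ^ 2) := by
    intro t; unfold phi; congr 2; field_simp
  simp_rw [h]
  rw [MeasureTheory.integral_const_mul, integral_gaussian]
  have h1 : Real.pi / (1/(2*σ^2)) = 2 * Real.pi * σ ^ 2 := by field_simp
  rw [h1, Real.sqrt_eq_rpow, ← Real.rpow_add (by positivity)]
  norm_num

lemma phi_std (u : ℝ) : phi 1 u = (1 / Real.sqrt (2 * Real.pi)) * Real.exp (-u ^ 2 / 2) := by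
  unfold phi
  rw [Real.sqrt_eq_rpow, one_div, ← Real.rpow_neg (by positivity)]
  norm_num

lemma stdNormCDF_eq_phi (z : ℝ) : stdNormCDF z = ∫ u in Iic z, phi 1 u := by
  unfold stdNormCDF; simp_rw [phi_std]

lemma phi_scale {σ : ℝ} (hσ : 0 < σ) (x : ℝ) : σ * phi σ (σ * x) = phi 1 x := by
  unfold phi
  have h1 : (2 * Real.pi * σ ^ 2) ^ (-(1:ℝ)/2)
      = (2 * Real.pi * 1 ^ 2) ^ (-(1:ℝ)/2) * (σ ^ 2 : ℝ) ^ (-(1:ℝ)/2) := by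
    rw [one_pow, mul_one, ← Real.mul_rpow (by positivity) (by positivity)]
  have h2 : (σ ^ 2 : ℝ) ^ (-(1:ℝ)/2) = σ⁻¹ := by
    rw [← Real.rpow_natCast σ 2, ← Real.rpow_mul hσ.le,
      show ((2:ℕ):ℝ) * (-(1:ℝ)/2) = -1 by norm_num, Real.rpow_neg_one]
  have h3 : -(σ * x) ^ 2 / (2 * σ ^ 2) = -x ^ 2 / (2 * 1 ^ 2) := by
    field_simp
  rw [h1, h2, h3]
  field_simp

lemma phi_int_Iic {σ : ℝ} (hσ : 0 < σ) (c : ℝ) :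
    ∫ t in Iic c, phi σ t = stdNormCDF (c / σ) := by
  calc ∫ t in Iic c, phi σ t
      = ∫ x in Ioi (-c), phi σ (-x) := by rw [integral_comp_neg_Ioi, neg_neg]
    _ = ∫ x in Ioi (-c), phi σ x :=
        setIntegral_congr_fun measurableSet_Ioi (fun t _ => phi_even σ t)
    _ = ∫ x in Ioi (σ * -(c/σ)), phi σ x := by
        rw [show σ * -(c/σ) = -c from by field_simp]
    _ = σ • ∫ x in Ioi (-(c/σ)), phi σ (σ * x) := by
        rw [integral_comp_mul_left_Ioi _ _ hσ, smul_smul, mul_inv_cancel₀ hσ.ne', one_smul]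
    _ = ∫ x in Ioi (-(c/σ)), σ * phi σ (σ * x) := by
        rw [← integral_smul]; simp_rw [smul_eq_mul]
    _ = ∫ x in Ioi (-(c/σ)), phi 1 x :=
        setIntegral_congr_fun measurableSet_Ioi (fun x _ => phi_scale hσ x)
    _ = ∫ x in Ioi (-(c/σ)), phi 1 (-x) :=
        (setIntegral_congr_fun measurableSet_Ioi (fun x _ => phi_even 1 x)).symm
    _ = ∫ x in Iic (c/σ), phi 1 x := by rw [integral_comp_neg_Ioi, neg_neg]
    _ = stdNormCDF (c / σ) := (stdNormCDF_eq_phi _).symm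

lemma phi_int_Ici {σ : ℝ} (hσ : 0 < σ) (c : ℝ) :
    ∫ t in Ici c, phi σ t = stdNormCDF (-c / σ) := by
  rw [integral_Ici_eq_integral_Ioi]
  calc ∫ t in Ioi c, phi σ t
      = ∫ x in Ioi c, phi σ (-x) :=
        (setIntegral_congr_fun measurableSet_Ioi (fun t _ => phi_even σ t)).symm
    _ = ∫ x in Iic (-c), phi σ x := integral_comp_neg_Ioi c (phi σ)
    _ = stdNormCDF (-c / σ) := phi_int_Iic hσ (-c)

lemma phi_int_Iio {σ : ℝ} (hσ : 0 < σ) (c : ℝ) :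
    ∫ t in Iio c, phi σ t = stdNormCDF (c / σ) := by
  rw [← phi_int_Iic hσ c]
  exact setIntegral_congr_set Iio_ae_eq_Iic

lemma stdNormCDF_nonneg (z : ℝ) : 0 ≤ stdNormCDF z :=
  setIntegral_nonneg measurableSet_Iic (fun u _ => by positivity)

variable {d : ℕ} {σ : ℝ}

lemma gaussPdf_nonneg (m : EuclideanSpace ℝ (Fin d)) (x) : 0 ≤ gaussPdf d m σ x := by
  unfold gaussPdf; positivity

lemma gaussPdf_measurable (m : EuclideanSpace ℝ (Fin d)) (hσ : 0 < σ) :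
    Measurable (gaussPdf d m σ) := by
  unfold gaussPdf
  fun_prop

/-- translation -/
lemma gauss_translate (hσ : 0 < σ) (m : EuclideanSpace ℝ (Fin d)) {S : Set (EuclideanSpace ℝ (Fin d))}
    (hS : MeasurableSet S) :
    gauss d m σ S = gauss d 0 σ ((· + m) ⁻¹' S) := by
  have hS' : MeasurableSet ((· + m) ⁻¹' S) := hS.preimage (measurable_add_const m)
  unfold gauss
  rw [withDensity_apply _ hS, withDensity_apply _ hS',
    ← lintegral_indicator hS, ← lintegral_indicator hS']
  rw [← lintegral_add_right_eq_self
    (fun z => S.indicator (fun x => ENNReal.ofReal (gaussPdf d m σ x)) z) m]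
  congr 1
  funext x
  by_cases hx : x + m ∈ S
  · rw [indicator_of_mem hx, indicator_of_mem (by exact hx)]
    unfold gaussPdf
    rw [add_sub_cancel_right, sub_zero]
  · rw [indicator_of_notMem hx, indicator_of_notMem (by exact hx)]

lemma norm_symm_sq (x : Fin d → ℝ) :
    ‖(MeasurableEquiv.toLp 2 (Fin d → ℝ)) x‖ ^ 2 = ∑ i, (x i) ^ 2 := by
  rw [EuclideanSpace.norm_eq, Real.sq_sqrt (by positivity)]
  congr 1
  funext i
  rw [Real.norm_eq_abs, sq_abs]
  rfl

lemma prod_phi (hσ : 0 < σ) (x : Fin d → ℝ) :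
    ∏ i, phi σ (x i)
      = (2 * Real.pi * σ ^ 2) ^ (-(d : ℝ) / 2) * Real.exp (-(∑ i, (x i) ^ 2) / (2 * σ ^ 2)) := by
  unfold phi
  rw [Finset.prod_mul_distrib, Finset.prod_const, ← Real.exp_sum]
  congr 1
  · rw [← Real.rpow_natCast ((2 * Real.pi * σ ^ 2) ^ (-(1:ℝ)/2)) _, ← Real.rpow_mul (by positivity)]
    norm_num [Finset.card_univ]
    congr 1
    ring
  · congr 1
    rw [← Finset.sum_div, ← Finset.sum_neg_distrib]

lemma gauss_coord (hd : 1 ≤ d) (hσ : 0 < σ) (u : EuclideanSpace ℝ (Fin d)) (hu : ‖u‖ = 1)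
    (A : Set ℝ) (hA : MeasurableSet A) :
    gauss d 0 σ {x | ⟪u, x⟫ ∈ A} = ENNReal.ofReal (∫ t in A, phi σ t) := by
  classical
  set i₀ : Fin d := ⟨0, hd⟩ with hi₀
  -- an orthonormal basis whose `i₀`-th vector is `u`
  obtain ⟨b, hb⟩ : ∃ b : OrthonormalBasis (Fin d) ℝ (EuclideanSpace ℝ (Fin d)), b i₀ = u := by
    have card_eq : Module.finrank ℝ (EuclideanSpace ℝ (Fin d)) = Fintype.card (Fin d) := by
      simp [finrank_euclideanSpace]
    have horth : Orthonormal ℝ (({i₀} : Set (Fin d)).restrict (fun _ : Fin d => u)) := by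
      constructor
      · intro i; exact hu
      · intro i j hij
        exact absurd (Subtype.ext ((i.2 : i.1 ∈ ({i₀} : Set (Fin d))).trans
          ((j.2 : j.1 ∈ ({i₀} : Set (Fin d))).symm))) hij
    obtain ⟨b, hb⟩ := Orthonormal.exists_orthonormalBasis_extension_of_card_eq card_eq horth
    exact ⟨b, hb i₀ rfl⟩
  set g : EuclideanSpace ℝ (Fin d) → ℝ := gaussPdf d 0 σ with hg
  have hgmeas : Measurable g := gaussPdf_measurable 0 hσ
  set S : Set (EuclideanSpace ℝ (Fin d)) := {x | ⟪u, x⟫ ∈ A} with hSdef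
  have hS : MeasurableSet S := by
    have : Measurable fun x : EuclideanSpace ℝ (Fin d) => ⟪u, x⟫ :=
      (continuous_const.inner continuous_id).measurable
    exact this hA
  set T : Set (EuclideanSpace ℝ (Fin d)) := {y | y i₀ ∈ A} with hTdef
  have hT : MeasurableSet T := by
    have : Measurable fun y : EuclideanSpace ℝ (Fin d) => y i₀ := by
      have : Continuous fun y : EuclideanSpace ℝ (Fin d) => y i₀ := by
        exact (continuous_apply i₀).comp (PiLp.continuous_ofLp (p := 2) (β := fun _ : Fin d => ℝ))
      exact this.measurable
    exact this hA
  -- step 1 : rotate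
  have rot : gauss d 0 σ S = ∫⁻ y, T.indicator (fun x => ENNReal.ofReal (g x)) y := by
    rw [gauss, withDensity_apply _ hS, ← lintegral_indicator hS]
    have hmp : MeasurePreserving (⇑b.repr.symm)
        (volume : Measure (EuclideanSpace ℝ (Fin d))) volume :=
      b.measurePreserving_repr_symm
    have hfmeas : Measurable (S.indicator fun x => ENNReal.ofReal (g x)) :=
      (hgmeas.ennreal_ofReal).indicator hS
    rw [← hmp.lintegral_comp hfmeas]
    congr 1
    funext y
    have hmem : (b.repr.symm y ∈ S) ↔ y i₀ ∈ A := by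
      have : ⟪u, b.repr.symm y⟫ = y i₀ := by
        rw [← hb, ← OrthonormalBasis.repr_apply_apply, LinearIsometryEquiv.apply_symm_apply]
      simp only [hSdef, Set.mem_setOf_eq, this]
    have hgval : g (b.repr.symm y) = g y := by
      simp only [hg, gaussPdf, sub_zero, LinearIsometryEquiv.norm_map]
    by_cases hy : y i₀ ∈ A
    · rw [indicator_of_mem (hmem.mpr hy), indicator_of_mem (by exact hy), hgval]
    · rw [indicator_of_notMem (fun h => hy (hmem.mp h)), indicator_of_notMem (by exact hy)]
  -- step 2 : the indicator as a real function
  set G : EuclideanSpace ℝ (Fin d) → ℝ := T.indicator g with hGdef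
  have hGnn : ∀ y, 0 ≤ G y := fun y => indicator_nonneg (fun x _ => gaussPdf_nonneg 0 x) y
  -- the product representation
  set h : Fin d → ℝ → ℝ := fun i t => if i = i₀ then A.indicator (phi σ) t else phi σ t with hh
  have hprod : ∀ x : Fin d → ℝ,
      G ((MeasurableEquiv.toLp 2 (Fin d → ℝ)) x) = ∏ i, h i (x i) := by
    intro x
    have hcoord : ((MeasurableEquiv.toLp 2 (Fin d → ℝ)) x) i₀ = x i₀ := rfl
    have hgx : g ((MeasurableEquiv.toLp 2 (Fin d → ℝ)) x) = ∏ i, phi σ (x i) := by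
      rw [prod_phi hσ, hg, gaussPdf, sub_zero, norm_symm_sq]
    by_cases hx : x i₀ ∈ A
    · have hmem : (MeasurableEquiv.toLp 2 (Fin d → ℝ)) x ∈ T := by
        simpa [hTdef, hcoord] using hx
      rw [hGdef, indicator_of_mem hmem, hgx]
      exact Finset.prod_congr rfl fun i _ => by
        by_cases hi : i = i₀
        · subst hi; simp [hh, indicator_of_mem hx]
        · simp [hh, hi]
    · have hmem : (MeasurableEquiv.toLp 2 (Fin d → ℝ)) x ∉ T := by
        simpa [hTdef, hcoord] using hx
      rw [hGdef, indicator_of_notMem hmem]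
      refine (Finset.prod_eq_zero (Finset.mem_univ i₀) ?_).symm
      simp [hh, indicator_of_notMem hx]
  have hint_h : ∀ i, Integrable (h i) := by
    intro i
    by_cases hi : i = i₀
    · subst hi; simpa [hh] using (phi_integrable hσ).indicator hA
    · simpa [hh, hi] using phi_integrable hσ
  have hGint : Integrable G := by
    have := (EuclideanSpace.volume_preserving_symm_measurableEquiv_toLp (Fin d)).symm
    rw [← this.integrable_comp_emb (MeasurableEquiv.measurableEmbedding _)]
    have : (G ∘ (MeasurableEquiv.toLp 2 (Fin d → ℝ)))
        = fun x : Fin d → ℝ => ∏ i, h i (x i) := funext fun x => hprod x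
    rw [MeasurableEquiv.symm_symm, this]
    exact Integrable.fintype_prod hint_h
  -- step 3 : compute the integral of G
  have hGint_eq : ∫ y, G y = ∫ t in A, phi σ t := by
    have hmp := (EuclideanSpace.volume_preserving_symm_measurableEquiv_toLp (Fin d)).symm
    rw [← hmp.integral_comp']
    calc ∫ x : Fin d → ℝ, G ((MeasurableEquiv.toLp 2 (Fin d → ℝ)) x)
        = ∫ x : Fin d → ℝ, ∏ i, h i (x i) := by simp_rw [hprod]
      _ = ∏ i, ∫ t, h i t := integral_fintype_prod_eq_prod h
      _ = ∫ t in A, phi σ t := by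
          have : ∀ i, ∫ t, h i t = if i = i₀ then (∫ t in A, phi σ t) else 1 := by
            intro i
            by_cases hi : i = i₀
            · subst hi; simp only [hh, if_true]
              rw [integral_indicator hA]
            · simp only [hh, hi, if_false]
              exact phi_integral hσ
          simp_rw [this]
          rw [Finset.prod_ite_eq' Finset.univ i₀ (fun _ => ∫ t in A, phi σ t)]
          simp
  -- put everything together
  rw [rot, ← hGint_eq, ofReal_integral_eq_lintegral_ofReal hGint
    (Filter.Eventually.of_forall hGnn)]
  congr 1
  funext y
  by_cases hy : y ∈ T
  · rw [hGdef, indicator_of_mem hy, indicator_of_mem hy]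
  · rw [hGdef, indicator_of_notMem hy, indicator_of_notMem hy, ENNReal.ofReal_zero]




lemma inner_measurable (u : EuclideanSpace ℝ (Fin d)) :
    Measurable fun x : EuclideanSpace ℝ (Fin d) => ⟪u, x⟫ :=
  (continuous_const.inner continuous_id).measurable

lemma gauss_lt (hd : 1 ≤ d) (hσ : 0 < σ) (m u : EuclideanSpace ℝ (Fin d)) (hu : ‖u‖ = 1)
    (c : ℝ) :
    gauss d m σ {x | ⟪u, x⟫ < c}
      = ENNReal.ofReal (stdNormCDF ((c - ⟪u, m⟫) / σ)) := by
  have hS : MeasurableSet {x : EuclideanSpace ℝ (Fin d) | ⟪u, x⟫ < c} :=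
    inner_measurable u measurableSet_Iio
  rw [gauss_translate hσ m hS]
  have hpre : ((· + m) ⁻¹' {x : EuclideanSpace ℝ (Fin d) | ⟪u, x⟫ < c})
      = {x | ⟪u, x⟫ ∈ Iio (c - ⟪u, m⟫)} := by
    ext x
    simp only [Set.mem_preimage, Set.mem_setOf_eq, inner_add_right, Set.mem_Iio]
    constructor <;> intro hx <;> linarith
  rw [hpre, gauss_coord hd hσ u hu _ measurableSet_Iio, phi_int_Iio hσ]

lemma gauss_ge (hd : 1 ≤ d) (hσ : 0 < σ) (m u : EuclideanSpace ℝ (Fin d)) (hu : ‖u‖ = 1)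
    (c : ℝ) :
    gauss d m σ {x | c ≤ ⟪u, x⟫}
      = ENNReal.ofReal (stdNormCDF ((⟪u, m⟫ - c) / σ)) := by
  have hS : MeasurableSet {x : EuclideanSpace ℝ (Fin d) | c ≤ ⟪u, x⟫} :=
    inner_measurable u measurableSet_Ici
  rw [gauss_translate hσ m hS]
  have hpre : ((· + m) ⁻¹' {x : EuclideanSpace ℝ (Fin d) | c ≤ ⟪u, x⟫})
      = {x | ⟪u, x⟫ ∈ Ici (c - ⟪u, m⟫)} := by
    ext x
    simp only [Set.mem_preimage, Set.mem_setOf_eq, inner_add_right, Set.mem_Ici]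
    constructor <;> intro hx <;> linarith
  rw [hpre, gauss_coord hd hσ u hu _ measurableSet_Ici, phi_int_Ici hσ, neg_sub]

/-- The misclassification error of the ideal LDA classifier under the
Gaussian-mixture data model `D`. -/
theorem lda_error (d : ℕ) (hd : 1 ≤ d) (μv : EuclideanSpace ℝ (Fin d)) (hμ : μv ≠ 0)
    (σ p : ℝ) (hσ : 0 < σ) (hp1 : 1 / 2 < p) (hp2 : p < 1) :
    ((Dmix d μv σ p) {z | hLDA d μv p z.1 ≠ z.2}).toReal =
      (1 / 2) * (stdNormCDF (-(2 * p - 1) * ‖μv‖ / σ)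
        + p * stdNormCDF (-(3 - 2 * p) * ‖μv‖ / σ)
        + (1 - p) * stdNormCDF ((2 * p + 1) * ‖μv‖ / σ)) := by
  classical
  have hn : 0 < ‖μv‖ := norm_pos_iff.mpr hμ
  set u : EuclideanSpace ℝ (Fin d) := ‖μv‖⁻¹ • μv with hudef
  have hu : ‖u‖ = 1 := by
    rw [hudef, norm_smul, norm_inv, norm_norm, inv_mul_cancel₀ hn.ne']
  set c₀ : ℝ := (2 - 2 * p) * ‖μv‖ with hc₀
  have hinner : ∀ x : EuclideanSpace ℝ (Fin d), ⟪u, x⟫ = ‖μv‖⁻¹ * ⟪μv, x⟫ := fun x =>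
    real_inner_smul_left _ _ _
  have hinvmul : ‖μv‖⁻¹ * ‖μv‖ = 1 := inv_mul_cancel₀ hn.ne'
  -- the geometric description of the classifier
  have key : ∀ x : EuclideanSpace ℝ (Fin d),
      (‖x - μv‖ ≤ ‖x - (-(4 * p - 3)) • μv‖) ↔ c₀ ≤ ⟪u, x⟫ := by
    intro x
    have h2 : ‖x - μv‖ ≤ ‖x - (-(4 * p - 3)) • μv‖
        ↔ ‖x - μv‖ ^ 2 ≤ ‖x - (-(4 * p - 3)) • μv‖ ^ 2 := by
      constructor
      · intro h; exact pow_le_pow_left₀ (norm_nonneg _) h 2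
      · intro h
        nlinarith [norm_nonneg (x - μv), norm_nonneg (x - (-(4 * p - 3)) • μv)]
    have hiff2 : (c₀ ≤ ⟪u, x⟫) ↔ (2 - 2 * p) * ‖μv‖ ^ 2 ≤ ⟪μv, x⟫ := by
      rw [hinner x, hc₀, inv_mul_eq_div, le_div_iff₀ hn]
      constructor <;> intro h <;> nlinarith [h]
    rw [h2, hiff2, norm_sub_sq_real, norm_sub_sq_real]
    have e1 : ⟪x, (-(4 * p - 3)) • μv⟫ = -(4 * p - 3) * ⟪x, μv⟫ :=
      real_inner_smul_right _ _ _
    have e2 : ‖(-(4 * p - 3)) • μv‖ ^ 2 = (4 * p - 3) ^ 2 * ‖μv‖ ^ 2 := by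
      rw [norm_smul, mul_pow, Real.norm_eq_abs, sq_abs]
      ring
    have hsym : ⟪x, μv⟫ = ⟪μv, x⟫ := real_inner_comm _ _
    rw [e1, e2, hsym]
    constructor
    · intro h; nlinarith [h, hp1]
    · intro h; nlinarith [h, hp1]
  -- measurability
  have hE : MeasurableSet {z : EuclideanSpace ℝ (Fin d) × ℝ | hLDA d μv p z.1 ≠ z.2} := by
    have hcond : MeasurableSet {x : EuclideanSpace ℝ (Fin d) |
        ‖x - μv‖ ≤ ‖x - (-(4 * p - 3)) • μv‖} :=
      measurableSet_le ((continuous_id.sub continuous_const).norm.measurable)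
        ((continuous_id.sub continuous_const).norm.measurable)
    have hLm : Measurable (hLDA d μv p) :=
      Measurable.ite hcond measurable_const measurable_const
    have h' : MeasurableSet {z : EuclideanSpace ℝ (Fin d) × ℝ | hLDA d μv p z.1 = z.2} :=
      measurableSet_eq_fun (hLm.comp measurable_fst) measurable_snd
    have := h'.compl
    rwa [Set.compl_setOf] at this
  -- preimages
  have hpre1 : (fun x : EuclideanSpace ℝ (Fin d) => (x, (1 : ℝ)))
      ⁻¹' {z : EuclideanSpace ℝ (Fin d) × ℝ | hLDA d μv p z.1 ≠ z.2}
      = {x | ⟪u, x⟫ < c₀} := by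
    ext x
    simp only [Set.mem_preimage, Set.mem_setOf_eq]
    unfold hLDA
    by_cases hx : ‖x - μv‖ ≤ ‖x - (-(4 * p - 3)) • μv‖
    · rw [if_pos hx]
      exact ⟨fun h => absurd rfl h, fun h => absurd ((key x).mp hx) (not_le.mpr h)⟩
    · rw [if_neg hx]
      exact ⟨fun _ => not_le.mp (fun h => hx ((key x).mpr h)), fun _ => by norm_num⟩
  have hpre2 : (fun x : EuclideanSpace ℝ (Fin d) => (x, (-1 : ℝ)))
      ⁻¹' {z : EuclideanSpace ℝ (Fin d) × ℝ | hLDA d μv p z.1 ≠ z.2}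
      = {x | c₀ ≤ ⟪u, x⟫} := by
    ext x
    simp only [Set.mem_preimage, Set.mem_setOf_eq]
    unfold hLDA
    by_cases hx : ‖x - μv‖ ≤ ‖x - (-(4 * p - 3)) • μv‖
    · rw [if_pos hx]
      exact ⟨fun _ => (key x).mp hx, fun _ => by norm_num⟩
    · rw [if_neg hx]
      exact ⟨fun h => absurd rfl h, fun h => absurd ((key x).mpr h) hx⟩
  -- the three inner products
  have hu1 : ⟪u, μv⟫ = ‖μv‖ := by
    rw [hinner, real_inner_self_eq_norm_sq]
    field_simp
  have hu2 : ⟪u, -μv⟫ = -‖μv‖ := by rw [inner_neg_right, hu1]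
  have hu3 : ⟪u, (3 : ℝ) • μv⟫ = 3 * ‖μv‖ := by
    rw [real_inner_smul_right, hu1]
  -- the three gaussian probabilities
  have g1 : (gauss d μv σ) {x | ⟪u, x⟫ < c₀}
      = ENNReal.ofReal (stdNormCDF (-(2 * p - 1) * ‖μv‖ / σ)) := by
    rw [gauss_lt hd hσ μv u hu c₀, hu1]
    congr 2
    rw [hc₀]; ring
  have g2 : (gauss d (-μv) σ) {x | c₀ ≤ ⟪u, x⟫}
      = ENNReal.ofReal (stdNormCDF (-(3 - 2 * p) * ‖μv‖ / σ)) := by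
    rw [gauss_ge hd hσ (-μv) u hu c₀, hu2]
    congr 2
    rw [hc₀]; ring
  have g3 : (gauss d ((3 : ℝ) • μv) σ) {x | c₀ ≤ ⟪u, x⟫}
      = ENNReal.ofReal (stdNormCDF ((2 * p + 1) * ‖μv‖ / σ)) := by
    rw [gauss_ge hd hσ ((3 : ℝ) • μv) u hu c₀, hu3]
    congr 2
    rw [hc₀]; ring
  -- assemble
  rw [Dmix, Measure.add_apply, Measure.add_apply, Measure.smul_apply, Measure.smul_apply,
    Measure.smul_apply, Measure.map_apply measurable_prodMk_right hE,
    Measure.map_apply measurable_prodMk_right hE,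
    Measure.map_apply measurable_prodMk_right hE, hpre1, hpre2, g1, g2, g3,
    smul_eq_mul, smul_eq_mul, smul_eq_mul,
    ← ENNReal.ofReal_mul (by norm_num : (0:ℝ) ≤ 1/2),
    ← ENNReal.ofReal_mul (by linarith : (0:ℝ) ≤ p/2),
    ← ENNReal.ofReal_mul (by linarith : (0:ℝ) ≤ (1-p)/2),
    ← ENNReal.ofReal_add
      (mul_nonneg (by norm_num) (stdNormCDF_nonneg _))
      (mul_nonneg (by linarith) (stdNormCDF_nonneg _)),
    ← ENNReal.ofReal_add
      (add_nonneg (mul_nonneg (by norm_num) (stdNormCDF_nonneg _))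
        (mul_nonneg (by linarith) (stdNormCDF_nonneg _)))
      (mul_nonneg (by linarith) (stdNormCDF_nonneg _)),
    ENNReal.toReal_ofReal
      (add_nonneg (add_nonneg (mul_nonneg (by norm_num) (stdNormCDF_nonneg _))
        (mul_nonneg (by linarith) (stdNormCDF_nonneg _)))
        (mul_nonneg (by linarith) (stdNormCDF_nonneg _)))]
  ring
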